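/- Let Λ_P be a Penrose model set. Then the class 𝓕(Λ_P) of all finite subsets of Λ_P is successively determined by two X-rays in ℤ[ζ₅]-directions: there exist a ℤ[ζ₅]-direction u₁ ∈ S¹ and a map f assigning to each possible X-ray function X_{u₁}F (for F ∈ 𝓕(Λ_P)) a ℤ[ζ₅]-direction u₂ = f(X_{u₁}F) not parallel to u₁, such that for all F, F' ∈ 𝓕(Λ_P), if X_{u₁}F' = X_{u₁}F and X_{u₂}F' = X_{u₂}F (with u₂ = f(X_{u₁}F)), then F' = F. -/

import Mathlib

open scoped Pointwise

noncomputable section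

instance : TopologicalSpace (ZMod 5) := ⊥
instance : DiscreteTopology (ZMod 5) := ⟨rfl⟩

/-- The primitive 5th root of unity ζ₅ = exp(2πi/5). -/
def zeta5 : ℂ := Complex.exp (2 * Real.pi * Complex.I / 5)

/-- The ring of cyclotomic integers ℤ[ζ₅], as the set of ℤ-combinations of 1, ζ₅, ζ₅², ζ₅³. -/
def Zzeta5 : Set ℂ := {z | ∃ a : Fin 4 → ℤ, z = ∑ j : Fin 4, (a j : ℂ) * zeta5 ^ (j : ℕ)}

/-- The (unique) integer coefficients of an element of ℤ[ζ₅] w.r.t. the basis 1, ζ₅, ζ₅², ζ₅³. -/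
def coeffs (z : ℂ) : Fin 4 → ℤ :=
  open Classical in
  if h : z ∈ Zzeta5 then h.choose else 0

/-- The star map z ↦ (σ₂(z), Σ aⱼ(z) mod 5), with σ₂ the Galois automorphism ζ₅ ↦ ζ₅². -/
def starMap (z : ℂ) : ℂ × ZMod 5 :=
  (∑ j : Fin 4, (coeffs z j : ℂ) * zeta5 ^ (2 * (j : ℕ)),
   ∑ j : Fin 4, ((coeffs z j : ℤ) : ZMod 5))

/-- The regular pentagon P: the convex hull of the 5th roots of unity. -/
def pent : Set ℂ := convexHull ℝ {z : ℂ | z ^ 5 = 1}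

/-- The golden ratio τ = (1+√5)/2. -/
def tauR : ℝ := (1 + Real.sqrt 5) / 2

/-- The Penrose window W_P ⊂ ℝ² × ℤ/5ℤ. -/
def WP : Set (ℂ × ZMod 5) :=
  (pent ×ˢ ({1} : Set (ZMod 5))) ∪ ((-pent) ×ˢ ({2} : Set (ZMod 5))) ∪
    ((tauR • pent) ×ˢ ({3} : Set (ZMod 5))) ∪ ((-(tauR • pent)) ×ˢ ({4} : Set (ZMod 5)))

/-- The shifted window W_P^u = (u, 0) + W_P. -/
def WPu (u : ℂ) : Set (ℂ × ZMod 5) := (fun p => ((u, (0 : ZMod 5)) + p)) '' WP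

/-- The model set Λ_P^u = {z ∈ ℤ[ζ₅] : z⋆ ∈ W_P^u}. -/
def LambdaPu (u : ℂ) : Set ℂ := {z | z ∈ Zzeta5 ∧ starMap z ∈ WPu u}

/-- Λ_P^u is generic if the boundary of W_P^u contains no point of ℤ[ζ₅]⋆. -/
def IsGeneric (u : ℂ) : Prop := ∀ z ∈ Zzeta5, starMap z ∉ frontier (WPu u)

/-- A Penrose model set: a translate t + Λ_P^u of a generic Λ_P^u. -/
def IsPMS (Λ : Set ℂ) : Prop := ∃ t u : ℂ, IsGeneric u ∧ Λ = (fun z => t + z) '' LambdaPu u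

/-- v is parallel to u. -/
def Par (u v : ℂ) : Prop := ∃ r : ℝ, r ≠ 0 ∧ v = r • u

/-- A ℤ[ζ₅]-direction: a direction parallel to a nonzero element of ℤ[ζ₅]. -/
def IsZ5Direction (u : ℂ) : Prop := ∃ z ∈ Zzeta5, z ≠ 0 ∧ Par u z

/-- The line through p in direction u. -/
def line (u p : ℂ) : Set ℂ := {x | ∃ t : ℝ, x = p + t • u}

/-- The X-ray of F in direction u, as a function of the base point of the line. -/
def Xray (u : ℂ) (F : Set ℂ) : ℂ → ℕ := fun p => (F ∩ line u p).ncard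

/-- A convex subset C of Λ: a finite subset with C = conv(C) ∩ Λ. -/
def IsConvexSubset (Λ C : Set ℂ) : Prop :=
  C.Finite ∧ C ⊆ Λ ∧ C = convexHull ℝ C ∩ Λ

/-! ### Auxiliary material -/

open Polynomial

lemma hzprim : IsPrimitiveRoot zeta5 5 := by
  have := Complex.isPrimitiveRoot_exp 5 (by norm_num)
  convert this using 2
  simp [zeta5]

lemma hz5 : zeta5 ^ 5 = 1 := hzprim.pow_eq_one

lemma hgeom : zeta5^4 + zeta5^3 + zeta5^2 + zeta5 + 1 = 0 := by
  have := hzprim.geom_sum_eq_zero (by norm_num)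
  rw [Finset.sum_range_succ, Finset.sum_range_succ, Finset.sum_range_succ,
    Finset.sum_range_succ, Finset.sum_range_succ, Finset.sum_range_zero] at this
  linear_combination this

lemma cyc_aeval : (aeval zeta5) (Polynomial.cyclotomic 5 ℤ) = 0 := by
  haveI : Fact (Nat.Prime 5) := ⟨by norm_num⟩
  rw [Polynomial.cyclotomic_prime ℤ 5]
  simp only [map_sum, map_pow, aeval_X]
  exact hzprim.geom_sum_eq_zero (by norm_num)

lemma cyc_deg : (Polynomial.cyclotomic 5 ℤ).degree = 4 := by
  rw [Polynomial.degree_cyclotomic]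
  norm_num [Nat.totient_prime (by norm_num : Nat.Prime 5)]

lemma aeval_mem (p : ℤ[X]) : (aeval zeta5) p ∈ Zzeta5 := by
  have hm : (Polynomial.cyclotomic 5 ℤ).Monic := Polynomial.cyclotomic.monic 5 ℤ
  have hdiv := Polynomial.modByMonic_add_div p (Polynomial.cyclotomic 5 ℤ)
  set r := p %ₘ (Polynomial.cyclotomic 5 ℤ) with hr
  have heq : (aeval zeta5) p = (aeval zeta5) r := by
    conv_lhs => rw [← hdiv]
    simp [cyc_aeval]
  have hdeg : r.natDegree < 4 := by
    rcases eq_or_ne r 0 with h | h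
    · simp [h]
    · have hlt := Polynomial.degree_modByMonic_lt p hm
      rw [cyc_deg, ← hr] at hlt
      exact_mod_cast (Polynomial.natDegree_lt_iff_degree_lt h).2 (by exact_mod_cast hlt)
  refine ⟨fun j => r.coeff j, ?_⟩
  rw [heq, Polynomial.aeval_eq_sum_range' hdeg]
  rw [← Fin.sum_univ_eq_sum_range (fun i => r.coeff i • zeta5 ^ i) 4]
  exact Finset.sum_congr rfl (fun j _ => by simp [zsmul_eq_mul])

lemma exists_aeval {z : ℂ} (hz : z ∈ Zzeta5) : ∃ p : ℤ[X], (aeval zeta5) p = z := by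
  obtain ⟨a, ha⟩ := hz
  refine ⟨∑ j : Fin 4, C (a j) * X ^ (j:ℕ), ?_⟩
  rw [map_sum, ha]
  exact Finset.sum_congr rfl (fun j _ => by simp)

lemma Zz_sub {z w : ℂ} (hz : z ∈ Zzeta5) (hw : w ∈ Zzeta5) : z - w ∈ Zzeta5 := by
  obtain ⟨p, hp⟩ := exists_aeval hz; obtain ⟨q, hq⟩ := exists_aeval hw
  simpa [hp, hq] using aeval_mem (p - q)

lemma Zz_mul {z w : ℂ} (hz : z ∈ Zzeta5) (hw : w ∈ Zzeta5) : z * w ∈ Zzeta5 := by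
  obtain ⟨p, hp⟩ := exists_aeval hz; obtain ⟨q, hq⟩ := exists_aeval hw
  simpa [hp, hq] using aeval_mem (p * q)

lemma hconj : (starRingEnd ℂ) zeta5 = zeta5 ^ 4 := by
  have habs : ‖zeta5‖ = 1 := hzprim.norm'_eq_one (by norm_num)
  have h1 : zeta5 * (starRingEnd ℂ) zeta5 = 1 := by
    rw [Complex.mul_conj, Complex.normSq_eq_norm_sq, habs]; norm_num
  linear_combination zeta5^4 * h1 - (starRingEnd ℂ) zeta5 * hz5

lemma Zz_conj {z : ℂ} (hz : z ∈ Zzeta5) : (starRingEnd ℂ) z ∈ Zzeta5 := by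
  obtain ⟨p, hp⟩ := exists_aeval hz
  have : (starRingEnd ℂ) z = (aeval zeta5) (p.comp (X ^ 4)) := by
    rw [Polynomial.aeval_comp, map_pow, aeval_X, ← hconj, ← hp]
    rw [Polynomial.aeval_def, Polynomial.aeval_def, Polynomial.hom_eval₂]
    congr 1
    exact (RingHom.ext_int _ _)
  rw [this]; exact aeval_mem _

lemma indep (c : Fin 4 → ℤ) (h : ∑ j : Fin 4, (c j : ℂ) * zeta5 ^ (j : ℕ) = 0) : c = 0 := by
  by_contra hc
  set p : ℚ[X] := ∑ j : Fin 4, C ((c j : ℚ)) * X ^ (j:ℕ) with hp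
  have hpz : (aeval zeta5) p = 0 := by
    rw [hp, map_sum]
    rw [show (0:ℂ) = ∑ j : Fin 4, (c j : ℂ) * zeta5 ^ (j:ℕ) from h.symm]
    exact Finset.sum_congr rfl (fun j _ => by simp)
  have hcoeff : ∀ j : Fin 4, p.coeff j = (c j : ℚ) := by
    intro j
    rw [hp, Polynomial.finset_sum_coeff]
    rw [Finset.sum_eq_single j]
    · simp
    · intro b _ hb
      rw [Polynomial.coeff_C_mul, Polynomial.coeff_X_pow,
        if_neg (by exact_mod_cast fun h => hb (Fin.ext (by omega)))]
      ring
    · simp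
  have hpne : p ≠ 0 := by
    intro h0
    apply hc
    funext j
    have := hcoeff j
    rw [h0] at this
    simpa using this.symm
  have hdegp : p.degree < 4 := by
    apply lt_of_le_of_lt (Polynomial.degree_sum_le _ _)
    refine (Finset.sup_lt_iff (bot_lt_iff_ne_bot.2 (by norm_num))).2 ?_
    intro j _
    apply lt_of_le_of_lt (Polynomial.degree_C_mul_X_pow_le _ _)
    exact_mod_cast j.isLt
  have hmind := minpoly.degree_le_of_ne_zero ℚ zeta5 hpne hpz
  rw [← Polynomial.cyclotomic_eq_minpoly_rat hzprim (by norm_num)] at hmind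
  have hd4 : (Polynomial.cyclotomic 5 ℚ).degree = 4 := by
    rw [Polynomial.degree_cyclotomic]
    norm_num [Nat.totient_prime (by norm_num : Nat.Prime 5)]
  rw [hd4] at hmind
  exact absurd (lt_of_le_of_lt hmind hdegp) (lt_irrefl _)

lemma coeffs_spec {z : ℂ} (hz : z ∈ Zzeta5) :
    z = ∑ j : Fin 4, (coeffs z j : ℂ) * zeta5 ^ (j:ℕ) := by
  have h1 : coeffs z = hz.choose := dif_pos hz
  rw [h1]
  exact hz.choose_spec

lemma zeta5_im_pos : 0 < zeta5.im := by
  rw [zeta5, show (2 * Real.pi * Complex.I / 5 : ℂ) = ((2*Real.pi/5 : ℝ) : ℂ) * Complex.I by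
    push_cast; ring, Complex.exp_ofReal_mul_I_im]
  apply Real.sin_pos_of_pos_of_lt_pi
  · positivity
  · rw [div_lt_iff₀ (by norm_num)]
    nlinarith [Real.pi_pos]

/-- The auxiliary "omega" element ζ₅ - ζ₅⁴ (purely imaginary). -/
def omg : ℂ := zeta5 - zeta5 ^ 4

/-- The auxiliary real element -ζ² - ζ³ - 3 = τ - 3. -/
def tau3 : ℂ := (-zeta5 ^ 2 - zeta5 ^ 3) - 3

/-- The key quantity associated to a pair of points. -/
def xiP (x y : ℂ) : ℂ := ((y - x) - (starRingEnd ℂ) (y - x)) * omg * tau3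

lemma omg_mem : omg ∈ Zzeta5 := by
  have := aeval_mem (X - X ^ 4)
  simpa [omg, map_sub, map_pow, aeval_X] using this

lemma tau3_mem : tau3 ∈ Zzeta5 := by
  have := aeval_mem (-X ^ 2 - X ^ 3 - C 3)
  simp only [map_sub, map_neg, map_pow, aeval_X, aeval_C] at this
  have h3 : (algebraMap ℤ ℂ) 3 = (3:ℂ) := by push_cast; rfl
  rw [h3] at this
  simpa [tau3] using this

lemma one_mem_Zz : (1 : ℂ) ∈ Zzeta5 := by simpa using aeval_mem 1

lemma five_mem_Zz : (5 : ℂ) ∈ Zzeta5 := by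
  have := aeval_mem (C 5)
  rw [aeval_C] at this
  have h5 : (algebraMap ℤ ℂ) 5 = (5:ℂ) := by push_cast; rfl
  rwa [h5] at this

lemma two_mem_Zz : (2 : ℂ) ∈ Zzeta5 := by
  have := aeval_mem (C 2)
  rw [aeval_C] at this
  have h2 : (algebraMap ℤ ℂ) 2 = (2:ℂ) := by push_cast; rfl
  rwa [h2] at this

lemma conj_omg : (starRingEnd ℂ) omg = -omg := by
  have h16 : (zeta5 ^ 4) ^ 4 = zeta5 := by
    linear_combination (zeta5^11 + zeta5^6 + zeta5) * hz5
  rw [omg, map_sub, hconj, map_pow, hconj, h16]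
  ring

lemma hkey : omg ^ 2 * tau3 = 5 := by
  rw [omg, tau3]
  linear_combination (-zeta5^6 - zeta5^5 - zeta5^3 + 2*zeta5^2 - zeta5 + 4) * hz5 - hgeom

lemma mem_line_one (q p : ℂ) : q ∈ line 1 p ↔ q.im = p.im := by
  constructor
  · rintro ⟨t, rfl⟩
    simp [Complex.real_smul]
  · intro h
    exact ⟨q.re - p.re, by
      apply Complex.ext <;> simp [Complex.real_smul, h]⟩

lemma mem_line_self (u p : ℂ) : p ∈ line u p := ⟨0, by simp⟩

lemma Xray_ne_zero {u : ℂ} {G : Set ℂ} (hGf : G.Finite) {p : ℂ} (hp : p ∈ G) :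
    Xray u G p ≠ 0 := by
  have hne : (G ∩ line u p).Nonempty := ⟨p, hp, mem_line_self u p⟩
  have := (Set.ncard_pos (hGf.subset Set.inter_subset_left)).2 hne
  simpa [Xray] using this.ne'

theorem successively_determined_by_two_xrays (Λ : Set ℂ) (hΛ : IsPMS Λ) :
    ∃ u₁ : ℂ, ‖u₁‖ = 1 ∧ IsZ5Direction u₁ ∧
      ∃ f : (ℂ → ℕ) → ℂ,
        ∀ F : Set ℂ, F ⊆ Λ → F.Finite →
          ‖f (Xray u₁ F)‖ = 1 ∧ IsZ5Direction (f (Xray u₁ F)) ∧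
          ¬ Par u₁ (f (Xray u₁ F)) ∧
          ∀ F' : Set ℂ, F' ⊆ Λ → F'.Finite →
            Xray u₁ F' = Xray u₁ F →
            Xray (f (Xray u₁ F)) F' = Xray (f (Xray u₁ F)) F → F' = F := by
  classical
  obtain ⟨t0, u0, _, hΛeq⟩ := hΛ
  -- differences of points of Λ lie in ℤ[ζ₅]
  have hΛsub : ∀ {x y : ℂ}, x ∈ Λ → y ∈ Λ → y - x ∈ Zzeta5 := by
    intro x y hx hy
    rw [hΛeq] at hx hy
    obtain ⟨x0, hx0, rfl⟩ := hx
    obtain ⟨y0, hy0, rfl⟩ := hy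
    simpa using Zz_sub hy0.1 hx0.1
  -- the "good second direction" predicate
  set Good : (ℂ → ℕ) → ℂ → Prop := fun X w =>
    ‖w‖ = 1 ∧ IsZ5Direction w ∧ ¬ Par 1 w ∧
    ∀ G G' : Set ℂ, G ⊆ Λ → G.Finite → G' ⊆ Λ → G'.Finite →
      Xray 1 G = X → Xray 1 G' = X → Xray w G' = Xray w G → G' = G
    with hGood
  refine ⟨1, norm_one, ⟨1, one_mem_Zz, one_ne_zero, 1, one_ne_zero, by simp⟩,
    fun X => if h : ∃ w, Good X w then h.choose else 1, ?_⟩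
  intro F hF hFfin
  -- heights of points determined by the first X-ray
  have hht : ∀ (G : Set ℂ), G.Finite → Xray 1 G = Xray 1 F → ∀ p ∈ G,
      ∃ x ∈ F, x.im = p.im := by
    intro G hGf hX p hp
    have h1 : Xray 1 F p ≠ 0 := by
      rw [← hX]
      exact Xray_ne_zero hGf hp
    obtain ⟨x, hxF, hxl⟩ := Set.nonempty_of_ncard_ne_zero h1
    exact ⟨x, hxF, (mem_line_one x p).1 hxl⟩
  -- Main existence of a good second direction for F
  have hex : ∃ w, Good (Xray 1 F) w := by
    obtain ⟨N, hN1, hbound⟩ : ∃ N : ℕ, 1 ≤ N ∧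
        ∀ x ∈ F, ∀ y ∈ F, ∀ j : Fin 4, (coeffs (xiP x y) j).natAbs < N := by
      refine ⟨1 + ∑ q ∈ (hFfin.prod hFfin).toFinset,
        ∑ j : Fin 4, (coeffs (xiP q.1 q.2) j).natAbs, Nat.le_add_right _ _, ?_⟩
      intro x hx y hy j
      have hmem : (x, y) ∈ (hFfin.prod hFfin).toFinset :=
        (Set.Finite.mem_toFinset _).2 ⟨hx, hy⟩
      have h1 := Finset.single_le_sum (f := fun j : Fin 4 => (coeffs (xiP x y) j).natAbs)
        (fun _ _ => Nat.zero_le _) (Finset.mem_univ j)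
      have h2 := Finset.single_le_sum
        (f := fun q : ℂ × ℂ => ∑ j : Fin 4, (coeffs (xiP q.1 q.2) j).natAbs)
        (fun _ _ => Nat.zero_le _) hmem
      exact lt_of_le_of_lt (h1.trans h2) (lt_one_add _)
    set w : ℂ := 1 + (N : ℂ) * omg with hwdef
    have hwim : w.im = N * (2 * zeta5.im) := by
      have h4 : (zeta5 ^ 4).im = -zeta5.im := by
        rw [← hconj]; exact Complex.conj_im _
      rw [hwdef]
      simp only [Complex.add_im, Complex.one_im, Complex.mul_im, Complex.natCast_re,
        Complex.natCast_im, omg, Complex.sub_im, h4]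
      ring
    have hwimne : w.im ≠ 0 := by
      rw [hwim]
      have hN0 : (0:ℝ) < N := by exact_mod_cast hN1
      have := zeta5_im_pos
      exact ne_of_gt (by nlinarith)
    have hwne : w ≠ 0 := fun h => hwimne (by rw [h]; simp)
    have hwZ : w ∈ Zzeta5 := by
      have : w = (aeval zeta5) (1 + C (N : ℤ) * (X - X ^ 4)) := by
        simp [hwdef, omg]
      rw [this]; exact aeval_mem _
    set u2 : ℂ := (‖w‖)⁻¹ • w with hu2
    have hwu2 : w = ‖w‖ • u2 := by
      rw [hu2, smul_smul, mul_inv_cancel₀ (norm_ne_zero_iff.2 hwne), one_smul]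
    refine ⟨u2, norm_smul_inv_norm hwne,
      ⟨w, hwZ, hwne, ‖w‖, norm_ne_zero_iff.2 hwne, hwu2⟩, ?_, ?_⟩
    · rintro ⟨r, hr, hru⟩
      apply hwimne
      rw [hwu2, hru]
      simp [Complex.smul_im]
    -- the determination property
    intro G G' hG hGfin hG' hG'fin hXG hXG' hXw
    -- key claim: each u2-line contains at most one point of Λ at heights of F
    have key : ∀ p₁ ∈ Λ, ∀ p₂ ∈ Λ, (∃ x ∈ F, x.im = p₁.im) → (∃ y ∈ F, y.im = p₂.im) →
        p₂ ∈ line u2 p₁ → p₂ = p₁ := by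
      rintro p₁ hp₁ p₂ hp₂ ⟨x, hx, hx1⟩ ⟨y, hy, hy2⟩ ⟨t, ht⟩
      by_contra hne
      set s : ℝ := t * ‖w‖⁻¹ with hs
      have hm : p₂ - p₁ = (s : ℂ) * w := by
        rw [ht, hu2, smul_smul, ← hs, Complex.real_smul]
        ring
      have hsne : s ≠ 0 := by
        intro h0
        apply hne
        have h1 : p₂ - p₁ = 0 := by rw [hm, h0]; simp
        exact sub_eq_zero.1 h1
      have hmZ : p₂ - p₁ ∈ Zzeta5 := hΛsub hp₁ hp₂
      have hdZ : y - x ∈ Zzeta5 := hΛsub (hF hx) (hF hy)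
      have him : (p₂ - p₁).im = (y - x).im := by
        simp [Complex.sub_im, hx1, hy2]
      have e1 : (p₂ - p₁) - (starRingEnd ℂ) (p₂ - p₁)
          = (y - x) - (starRingEnd ℂ) (y - x) := by
        rw [Complex.sub_conj, Complex.sub_conj, him]
      have hcw : (starRingEnd ℂ) w = 1 - (N:ℂ) * omg := by
        rw [hwdef, map_add, map_mul, map_one, map_natCast, conj_omg]; ring
      have e3 : (y - x) - (starRingEnd ℂ) (y - x) = 2 * (s:ℂ) * (N:ℂ) * omg := by
        rw [← e1, hm, map_mul, Complex.conj_ofReal, hcw, hwdef]; ring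
      have e6 : 2 * (p₂ - p₁) - ((y - x) - (starRingEnd ℂ) (y - x)) = 2 * (s:ℂ) := by
        rw [hm, e3, hwdef]; ring
      set Zt : ℂ := (5:ℂ) * (2 * (p₂ - p₁) - ((y - x) - (starRingEnd ℂ) (y - x)))
        with hZt
      have hζtZ : Zt ∈ Zzeta5 := by
        rw [hZt]
        exact Zz_mul five_mem_Zz
          (Zz_sub (Zz_mul two_mem_Zz hmZ) (Zz_sub hdZ (Zz_conj hdZ)))
      have hξZ : xiP x y ∈ Zzeta5 := by
        simp only [xiP]
        exact Zz_mul (Zz_mul (Zz_sub hdZ (Zz_conj hdZ)) omg_mem) tau3_mem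
      have hξN : xiP x y = (N:ℂ) * Zt := by
        rw [hZt]
        simp only [xiP]
        linear_combination (omg * tau3) * e3 + (2*(s:ℂ)*(N:ℂ)) * hkey - (5*(N:ℂ)) * e6
      have hZts : Zt = (10:ℂ) * (s:ℂ) := by
        rw [hZt, e6]; push_cast; ring
      have hξne : xiP x y ≠ 0 := by
        rw [hξN, hZts]
        exact mul_ne_zero (Nat.cast_ne_zero.2 (by omega : N ≠ 0))
          (mul_ne_zero (by norm_num) (Complex.ofReal_ne_zero.2 hsne))
      have hsplit : ∑ j : Fin 4,
            (((coeffs (xiP x y) j : ℂ)) - (N:ℂ) * ((coeffs Zt j : ℂ))) * zeta5 ^ (j:ℕ)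
          = (∑ j : Fin 4, (coeffs (xiP x y) j : ℂ) * zeta5 ^ (j:ℕ))
            - (N:ℂ) * ∑ j : Fin 4, (coeffs Zt j : ℂ) * zeta5 ^ (j:ℕ) := by
        rw [Finset.mul_sum, ← Finset.sum_sub_distrib]
        exact Finset.sum_congr rfl fun j _ => by ring
      have hsum0 : ∑ j : Fin 4,
          ((coeffs (xiP x y) j - (N:ℤ) * coeffs Zt j : ℤ) : ℂ) * zeta5 ^ (j:ℕ) = 0 := by
        push_cast
        rw [hsplit, ← coeffs_spec hξZ, ← coeffs_spec hζtZ, hξN]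
        ring
      have hzero := indep (fun j => coeffs (xiP x y) j - (N:ℤ) * coeffs Zt j) hsum0
      have hab : ∀ j, coeffs (xiP x y) j = (N:ℤ) * coeffs Zt j := by
        intro j
        have := congrFun hzero j
        simpa [sub_eq_zero] using this
      have hane : ∃ j, coeffs (xiP x y) j ≠ 0 := by
        by_contra hno
        push_neg at hno
        apply hξne
        rw [coeffs_spec hξZ]
        simp [hno]
      obtain ⟨j, hj⟩ := hane
      have hbj : coeffs Zt j ≠ 0 := fun h => hj (by rw [hab j, h, mul_zero])
      have h1 : 0 < (coeffs Zt j).natAbs := Int.natAbs_pos.2 hbj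
      have h2 : (coeffs (xiP x y) j).natAbs = N * (coeffs Zt j).natAbs := by
        rw [hab j, Int.natAbs_mul]
        simp
      have h3 := hbound x hx y hy j
      have h4 : N ≤ N * (coeffs Zt j).natAbs := Nat.le_mul_of_pos_right N h1
      omega
    have dir : ∀ (A B : Set ℂ), A ⊆ Λ → A.Finite → B ⊆ Λ → B.Finite →
        Xray 1 A = Xray 1 F → Xray 1 B = Xray 1 F → Xray u2 A = Xray u2 B → A ⊆ B := by
      intro A B hA hAfin hB hBfin hXA hXB hABx p hp
      have h1 : Xray u2 B p ≠ 0 := by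
        rw [← hABx]
        exact Xray_ne_zero hAfin hp
      obtain ⟨q, hqB, hql⟩ := Set.nonempty_of_ncard_ne_zero h1
      have hqp := key p (hA hp) q (hB hqB)
        (hht A hAfin hXA p hp) (hht B hBfin hXB q hqB) hql
      rwa [hqp] at hqB
    exact Set.Subset.antisymm
      (dir G' G hG' hG'fin hG hGfin hXG' hXG hXw)
      (dir G G' hG hGfin hG' hG'fin hXG hXG' hXw.symm)
  -- conclude from hex
  have hg : Good (Xray 1 F) (if h : ∃ w, Good (Xray 1 F) w then h.choose else 1) := by
    rw [dif_pos hex]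
    exact hex.choose_spec
  exact ⟨hg.1, hg.2.1, hg.2.2.1, fun F' hF' hF'fin hX1 hX2 =>
    hg.2.2.2 F F' hF hFfin hF' hF'fin rfl hX1 hX2⟩

end
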